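/- Let R be symmetric positive definite with smallest eigenvalue at least α₀ > 0, μ̂ ∈ ℝ^N, β_i ≥ 0, and Ψ(w) = wᵀRw − wᵀμ̂ + Σ_i β_i|w_i|. Let w* be the minimizer of Ψ. Suppose w̃ ∈ ℝ^N satisfies: (a) Σ_{i ∈ supp(w̃)} ( (2Rw̃)_i − μ̂_i + β_i sgn(w̃_i) )² ≤ 2εα₀, and (b) |(2Rw̃)_i − μ̂_i| ≤ β_i for all i ∉ supp(w̃). Then Ψ(w̃) ≤ Ψ(w*) + ε. -/

import Mathlib

open Matrix BigOperators Finset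

/-- Theorem 2, approximate optimality: if `w̃` satisfies the
approximate stationarity conditions, then `Ψ(w̃) ≤ Ψ(w*) + ε`. The condition
that the smallest eigenvalue of `R` is at least `α₀` is expressed via the
quadratic form bound `α₀‖v‖² ≤ vᵀRv`. -/
theorem stmt9 (N : ℕ) (R : Matrix (Fin N) (Fin N) ℝ) (μ β : Fin N → ℝ)
    (α₀ : ℝ) (hα₀ : 0 < α₀)
    (hR : R.PosDef)
    (heig : ∀ v : Fin N → ℝ, α₀ * ∑ i, (v i) ^ 2 ≤ v ⬝ᵥ (R *ᵥ v))
    (hβ : ∀ i, 0 ≤ β i) (ε : ℝ) (hε : 0 < ε)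
    (Ψ : (Fin N → ℝ) → ℝ)
    (hΨ : ∀ w, Ψ w = w ⬝ᵥ (R *ᵥ w) - w ⬝ᵥ μ + ∑ i, β i * |w i|)
    (wstar wt : Fin N → ℝ)
    (hstar : ∀ v, Ψ wstar ≤ Ψ v)
    (ha : ∑ i ∈ Finset.univ.filter (fun i => wt i ≠ 0),
        (2 * (R *ᵥ wt) i - μ i + β i * Real.sign (wt i)) ^ 2 ≤ 2 * ε * α₀)
    (hb : ∀ i, wt i = 0 → |2 * (R *ᵥ wt) i - μ i| ≤ β i) :
    Ψ wt ≤ Ψ wstar + ε := by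
  classical
  set d : Fin N → ℝ := wstar - wt with hd
  clear_value d
  have hsym : ∀ x y : Fin N → ℝ, x ⬝ᵥ (R *ᵥ y) = y ⬝ᵥ (R *ᵥ x) := by
    intro x y
    have h := hR.isHermitian
    simp only [dotProduct, Matrix.mulVec, Finset.mul_sum]
    rw [Finset.sum_comm]
    refine Finset.sum_congr rfl fun i _ => Finset.sum_congr rfl fun j _ => ?_
    have hij : R j i = R i j := by
      have := congrFun (congrFun h i) j
      simpa [Matrix.conjTranspose_apply] using this
    rw [hij]; ring
  have hquad : wstar ⬝ᵥ (R *ᵥ wstar) - wt ⬝ᵥ (R *ᵥ wt)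
      = d ⬝ᵥ (R *ᵥ d) + 2 * (d ⬝ᵥ (R *ᵥ wt)) := by
    have h1 : d ⬝ᵥ (R *ᵥ d) = wstar ⬝ᵥ (R *ᵥ wstar) - wstar ⬝ᵥ (R *ᵥ wt)
        - wt ⬝ᵥ (R *ᵥ wstar) + wt ⬝ᵥ (R *ᵥ wt) := by
      simp only [hd, Matrix.mulVec_sub, dotProduct_sub, sub_dotProduct]
      ring
    have h2 : d ⬝ᵥ (R *ᵥ wt) = wstar ⬝ᵥ (R *ᵥ wt) - wt ⬝ᵥ (R *ᵥ wt) := by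
      simp only [hd, sub_dotProduct]
    have h3 := hsym wt wstar
    linarith
  set g : Fin N → ℝ := fun i => 2 * (R *ᵥ wt) i - μ i with hg
  set c : Fin N → ℝ := fun i => g i + β i * Real.sign (wt i) with hc
  clear_value c g
  have hkey : Ψ wstar - Ψ wt = d ⬝ᵥ (R *ᵥ d)
      + ∑ i, (g i * d i + β i * (|wstar i| - |wt i|)) := by
    rw [hΨ, hΨ]
    have hgd : ∑ i, (g i * d i + β i * (|wstar i| - |wt i|))
        = 2 * (d ⬝ᵥ (R *ᵥ wt)) - d ⬝ᵥ μ
          + (∑ i, β i * |wstar i| - ∑ i, β i * |wt i|) := by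
      have h1 : ∀ x ∈ Finset.univ, g x * d x + β x * (|wstar x| - |wt x|)
          = (2 * (d x * (R *ᵥ wt) x) - d x * μ x)
            + (β x * |wstar x| - β x * |wt x|) := fun x _ => by
        simp only [hg]; ring
      rw [Finset.sum_congr rfl h1, Finset.sum_add_distrib, Finset.sum_sub_distrib,
        Finset.sum_sub_distrib, ← Finset.mul_sum]
      rfl
    have hdm : d ⬝ᵥ μ = wstar ⬝ᵥ μ - wt ⬝ᵥ μ := by
      simp only [hd, sub_dotProduct]
    rw [hgd]
    linarith
  have hpt : ∀ i, (if wt i ≠ 0 then -((c i) ^ 2 / (4 * α₀)) else 0) - α₀ * (d i) ^ 2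
      ≤ g i * d i + β i * (|wstar i| - |wt i|) := by
    intro i
    by_cases h : wt i = 0
    · simp only [h, ne_eq, not_true_eq_false, if_false]
      have hdi : d i = wstar i := by simp [hd, h]
      have hb' : |g i| ≤ β i := by simp only [hg]; exact hb i h
      have h1 : |g i * wstar i| ≤ β i * |wstar i| := by
        rw [abs_mul]
        exact mul_le_mul_of_nonneg_right hb' (abs_nonneg _)
      have h4 : 0 ≤ g i * wstar i + β i * |wstar i| := by
        have := neg_abs_le (g i * wstar i)
        linarith
      have h5 : 0 ≤ α₀ * (wstar i) ^ 2 := by positivity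
      simp only [h, abs_zero, sub_zero, hdi]
      linarith
    · simp only [h, ne_eq, not_false_eq_true, if_true]
      have hs2 : Real.sign (wt i) * wstar i ≤ |wstar i| := by
        rcases lt_trichotomy (wt i) 0 with hlt | heq | hgt
        · rw [Real.sign_of_neg hlt]
          have := neg_abs_le (wstar i); linarith
        · exact absurd heq h
        · rw [Real.sign_of_pos hgt, one_mul]
          exact le_abs_self _
      have hs1 : Real.sign (wt i) * wt i = |wt i| := by
        rcases lt_trichotomy (wt i) 0 with hlt | heq | hgt
        · rw [Real.sign_of_neg hlt, abs_of_neg hlt]; ring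
        · exact absurd heq h
        · rw [Real.sign_of_pos hgt, abs_of_pos hgt]; ring
      have hdi : d i = wstar i - wt i := by simp [hd]
      have hlow : β i * (Real.sign (wt i) * d i) ≤ β i * (|wstar i| - |wt i|) := by
        apply mul_le_mul_of_nonneg_left _ (hβ i)
        rw [hdi]; nlinarith
      have hcd : -((c i) ^ 2 / (4 * α₀)) - α₀ * (d i) ^ 2 ≤ c i * d i := by
        have h2 : 0 ≤ (c i) ^ 2 + 4 * α₀ * (c i * d i) + 4 * α₀ ^ 2 * (d i) ^ 2 := by
          nlinarith [sq_nonneg (c i + 2 * α₀ * d i)]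
        have h3 : ((c i) ^ 2 + 4 * α₀ * (c i * d i) + 4 * α₀ ^ 2 * (d i) ^ 2) / (4 * α₀)
            = (c i) ^ 2 / (4 * α₀) + c i * d i + α₀ * (d i) ^ 2 := by
          field_simp
        have h4 := div_nonneg h2 (by positivity : (0:ℝ) ≤ 4 * α₀)
        rw [h3] at h4
        linarith
      have hce : c i * d i = g i * d i + β i * (Real.sign (wt i) * d i) := by
        simp only [hc]; ring
      linarith
  have hsum1 : ∑ i, ((if wt i ≠ 0 then -((c i) ^ 2 / (4 * α₀)) else 0) - α₀ * (d i) ^ 2)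
      ≤ ∑ i, (g i * d i + β i * (|wstar i| - |wt i|)) :=
    Finset.sum_le_sum fun i _ => hpt i
  have hsplit : ∑ i, ((if wt i ≠ 0 then -((c i) ^ 2 / (4 * α₀)) else 0) - α₀ * (d i) ^ 2)
      = -((∑ i ∈ Finset.univ.filter (fun i => wt i ≠ 0), (c i) ^ 2) / (4 * α₀))
        - α₀ * ∑ i, (d i) ^ 2 := by
    rw [Finset.sum_sub_distrib]
    congr 1
    · rw [← Finset.sum_filter, Finset.sum_neg_distrib, ← Finset.sum_div]
    · exact (Finset.mul_sum _ _ _).symm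
  have hca : ∑ i ∈ Finset.univ.filter (fun i => wt i ≠ 0), (c i) ^ 2 ≤ 2 * ε * α₀ := by
    simpa only [hc, hg] using ha
  have hdiv : (∑ i ∈ Finset.univ.filter (fun i => wt i ≠ 0), (c i) ^ 2) / (4 * α₀)
      ≤ ε / 2 := by
    rw [div_le_iff₀ (by positivity)]
    nlinarith
  have heigd := heig d
  have hfin : Ψ wstar - Ψ wt ≥ -(ε / 2) := by
    rw [hkey]
    have h6 := hsum1
    rw [hsplit] at h6
    linarith
  linarith
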